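/- The function g₁(x) = log det(xI + N₁) − log det(xI + N) is monotonically nonincreasing in x for x ≥ 0, where N is a K-dimensional positive definite Hermitian matrix and N₁ is its diagonal part. -/

import Mathlib

open Matrix
open scoped ComplexOrder

variable {K : ℕ}

lemma star_single_one (k : Fin K) :
    star (Pi.single k (1:ℂ) : Fin K → ℂ) = Pi.single k 1 := by
  ext i; simp [Pi.single_apply, apply_ite star]

lemma diag_nonneg_of_psd (A : Matrix (Fin K) (Fin K) ℂ) (hA : A.PosSemidef) (k : Fin K) :
    0 ≤ A k k := by
  have := hA.dotProduct_mulVec_nonneg (Pi.single k 1)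
  simpa [mulVec_single, star_single_one, single_dotProduct] using this

lemma diag_re_pos_of_pd (A : Matrix (Fin K) (Fin K) ℂ) (hA : A.PosDef) (k : Fin K) :
    0 < (A k k).re := by
  have h := hA.re_dotProduct_pos (x := Pi.single k 1) (by
    intro h; simpa using congr_fun h k)
  simpa [mulVec_single, star_single_one, single_dotProduct] using h

lemma diag_coe (A : Matrix (Fin K) (Fin K) ℂ) (hA : A.IsHermitian) (k : Fin K) :
    A k k = ((A k k).re : ℂ) := by
  have h : (starRingEnd ℂ) (A k k) = A k k := hA.apply k k
  exact (Complex.conj_eq_iff_re.mp h).symm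

lemma inv_diag_ge (M : Matrix (Fin K) (Fin K) ℂ) (hM : M.PosDef) (k : Fin K) :
    1 / (M k k).re ≤ (M⁻¹ k k).re := by
  have hMinv : (M⁻¹).PosDef := hM.inv
  set c : ℂ := M⁻¹ k k with hc
  have hcre : 0 < c.re := diag_re_pos_of_pd _ hMinv k
  have hcreal : c = (c.re : ℂ) := diag_coe _ hMinv.1 k
  have hc0 : c ≠ 0 := by
    rw [hcreal]; exact_mod_cast hcre.ne'
  have hU : IsUnit M.det := isUnit_iff_isUnit_det M |>.mp hM.isUnit
  have hMM : M * M⁻¹ = 1 := mul_nonsing_inv M hU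
  have hMM' : M⁻¹ * M = 1 := nonsing_inv_mul M hU
  set W : Matrix (Fin K) (Fin K) ℂ := 1 - c⁻¹ • M⁻¹ with hW
  have hWclean : Wᴴ = 1 - c⁻¹ • M⁻¹ := by
    rw [hW, conjTranspose_sub, conjTranspose_one, conjTranspose_smul,
      hMinv.1.eq]
    have hcs : star c = c := by rw [hcreal]; simp
    rw [star_inv₀, hcs]
  have hkey : Wᴴ * M * W = M - (2 * c⁻¹) • 1 + (c⁻¹ * c⁻¹) • M⁻¹ := by
    rw [hWclean, hW]
    simp only [sub_mul, mul_sub, one_mul, mul_one, smul_mul_assoc,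
      mul_smul_comm, smul_smul, hMM, hMM']
    module
  have hpsd := hM.posSemidef.conjTranspose_mul_mul_same W
  have h0 : 0 ≤ (Wᴴ * M * W) k k := diag_nonneg_of_psd _ hpsd k
  rw [hkey] at h0
  have hentry : (M - (2 * c⁻¹) • 1 + (c⁻¹ * c⁻¹) • M⁻¹) k k
      = M k k - c⁻¹ := by
    simp only [Matrix.add_apply, Matrix.sub_apply, Matrix.smul_apply,
      Matrix.one_apply_eq, smul_eq_mul, mul_one, ← hc]
    field_simp
    ring
  rw [hentry] at h0
  have hre : (c⁻¹).re ≤ (M k k).re := by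
    have := Complex.le_def.mp h0
    have h1 := this.1
    simp only [Complex.zero_re, Complex.sub_re] at h1
    linarith
  have hcinv : (c⁻¹).re = (c.re)⁻¹ := by
    rw [hcreal]; rw [← Complex.ofReal_inv]; simp
  rw [hcinv] at hre
  calc 1 / (M k k).re ≤ 1 / (c.re)⁻¹ := by
        apply one_div_le_one_div_of_le (by positivity) hre
    _ = c.re := by rw [one_div, inv_inv]

variable {K : ℕ}

section spectral
variable (N : Matrix (Fin K) (Fin K) ℂ) (hN : N.PosDef) (x : ℝ) (hx : 0 ≤ x)

lemma decomp_xN :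
    (x:ℂ) • (1 : Matrix (Fin K) (Fin K) ℂ) + N =
      (hN.1.eigenvectorUnitary : Matrix (Fin K) (Fin K) ℂ) *
        diagonal (fun i => ((x + hN.1.eigenvalues i : ℝ) : ℂ)) *
        star (hN.1.eigenvectorUnitary : Matrix (Fin K) (Fin K) ℂ) := by
  set U := (hN.1.eigenvectorUnitary : Matrix (Fin K) (Fin K) ℂ)
  have hUU : U * star U = 1 := Matrix.mem_unitaryGroup_iff.mp hN.1.eigenvectorUnitary.2
  have hD : diagonal (fun i => ((x + hN.1.eigenvalues i : ℝ) : ℂ)) =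
      (x:ℂ) • (1 : Matrix (Fin K) (Fin K) ℂ)
        + diagonal (RCLike.ofReal ∘ hN.1.eigenvalues) := by
    ext i j
    rcases eq_or_ne i j with rfl | h
    · simp only [Matrix.diagonal_apply_eq, Matrix.add_apply, Matrix.smul_apply,
        Matrix.one_apply_eq, Function.comp_apply, smul_eq_mul, mul_one]
      exact RCLike.ofReal_add x _
    · simp [Matrix.diagonal_apply_ne _ h, Matrix.one_apply_ne h]
  rw [hD, Matrix.mul_add, Matrix.add_mul, mul_smul_comm, smul_mul_assoc,
    Matrix.mul_one, hUU]
  congr 1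
  exact hN.1.spectral_theorem

lemma det_xN :
    ((x:ℂ) • (1 : Matrix (Fin K) (Fin K) ℂ) + N).det =
      ((∏ i, (x + hN.1.eigenvalues i) : ℝ) : ℂ) := by
  set U := (hN.1.eigenvectorUnitary : Matrix (Fin K) (Fin K) ℂ) with hU
  have hUU : U * star U = 1 := Matrix.mem_unitaryGroup_iff.mp hN.1.eigenvectorUnitary.2
  rw [decomp_xN N hN x, Matrix.det_mul, Matrix.det_mul, mul_right_comm,
    ← Matrix.det_mul, hUU, Matrix.det_one, one_mul, Matrix.det_diagonal]
  push_cast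
  rfl

lemma inv_xN (hx : 0 ≤ x) :
    ((x:ℂ) • (1 : Matrix (Fin K) (Fin K) ℂ) + N)⁻¹ =
      (hN.1.eigenvectorUnitary : Matrix (Fin K) (Fin K) ℂ) *
        diagonal (fun i => (((x + hN.1.eigenvalues i : ℝ) : ℂ))⁻¹) *
        star (hN.1.eigenvectorUnitary : Matrix (Fin K) (Fin K) ℂ) := by
  set U := (hN.1.eigenvectorUnitary : Matrix (Fin K) (Fin K) ℂ) with hU
  have hUU : U * star U = 1 := Matrix.mem_unitaryGroup_iff.mp hN.1.eigenvectorUnitary.2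
  have hUU' : star U * U = 1 := Matrix.mem_unitaryGroup_iff'.mp hN.1.eigenvectorUnitary.2
  apply Matrix.inv_eq_right_inv
  rw [decomp_xN N hN x]
  have hne : ∀ i, ((x + hN.1.eigenvalues i : ℝ) : ℂ) ≠ 0 := by
    intro i
    have : 0 < x + hN.1.eigenvalues i := by
      have := hN.eigenvalues_pos i; linarith [hx]
    exact_mod_cast this.ne'
  calc U * diagonal (fun i => ((x + hN.1.eigenvalues i : ℝ) : ℂ)) * star U *
        (U * diagonal (fun i => (((x + hN.1.eigenvalues i : ℝ) : ℂ))⁻¹) * star U)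
      = U * diagonal (fun i => ((x + hN.1.eigenvalues i : ℝ) : ℂ)) * (star U * U) *
        diagonal (fun i => (((x + hN.1.eigenvalues i : ℝ) : ℂ))⁻¹) * star U := by
        simp only [Matrix.mul_assoc]
    _ = 1 := by
        rw [hUU', Matrix.mul_one, Matrix.mul_assoc _ _ (diagonal _),
          Matrix.diagonal_mul_diagonal]
        have : (fun i => ((x + hN.1.eigenvalues i : ℝ) : ℂ) *
            (((x + hN.1.eigenvalues i : ℝ) : ℂ))⁻¹) = fun _ => (1:ℂ) := by
          funext i; exact mul_inv_cancel₀ (hne i)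
        rw [this, Matrix.diagonal_one, Matrix.mul_assoc, Matrix.one_mul, hUU]

lemma trace_inv_xN (hx : 0 ≤ x) :
    ∑ k, (((x:ℂ) • (1 : Matrix (Fin K) (Fin K) ℂ) + N)⁻¹ k k).re =
      ∑ i, (x + hN.1.eigenvalues i)⁻¹ := by
  set U := (hN.1.eigenvectorUnitary : Matrix (Fin K) (Fin K) ℂ) with hU
  have hUU' : star U * U = 1 := Matrix.mem_unitaryGroup_iff'.mp hN.1.eigenvectorUnitary.2
  have htr : Matrix.trace (((x:ℂ) • (1 : Matrix (Fin K) (Fin K) ℂ) + N)⁻¹) =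
      ((∑ i, (x + hN.1.eigenvalues i)⁻¹ : ℝ) : ℂ) := by
    rw [inv_xN N hN x hx, Matrix.trace_mul_cycle, hUU', Matrix.one_mul,
      Matrix.trace_diagonal]
    push_cast
    rfl
  calc ∑ k, (((x:ℂ) • (1 : Matrix (Fin K) (Fin K) ℂ) + N)⁻¹ k k).re
      = (Matrix.trace (((x:ℂ) • (1 : Matrix (Fin K) (Fin K) ℂ) + N)⁻¹)).re := by
        rw [Matrix.trace, Complex.re_sum]; rfl
    _ = ∑ i, (x + hN.1.eigenvalues i)⁻¹ := by rw [htr, Complex.ofReal_re]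

end spectral

section main
variable (N : Matrix (Fin K) (Fin K) ℂ) (hN : N.PosDef)

lemma key_ineq (x : ℝ) (hx : 0 ≤ x) :
    ∑ k, (x + (N k k).re)⁻¹ ≤ ∑ i, (x + hN.1.eigenvalues i)⁻¹ := by
  set M := (x:ℂ) • (1 : Matrix (Fin K) (Fin K) ℂ) + N with hMdef
  have hone : ((x:ℂ) • (1 : Matrix (Fin K) (Fin K) ℂ)) =
      diagonal (fun _ => (x:ℂ)) := by
    ext i j
    rcases eq_or_ne i j with rfl | h
    · simp
    · simp [Matrix.one_apply_ne h, Matrix.diagonal_apply_ne _ h]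
  have hM : M.PosDef := by
    apply Matrix.PosDef.posSemidef_add _ hN
    rw [hone]
    exact Matrix.PosSemidef.diagonal (fun i => Complex.zero_le_real.mpr hx)
  have hMkk : ∀ k, (M k k).re = x + (N k k).re := by
    intro k
    simp [hMdef, Matrix.add_apply, Matrix.smul_apply, Matrix.one_apply_eq]
  have h1 : ∀ k, (x + (N k k).re)⁻¹ ≤ (M⁻¹ k k).re := by
    intro k
    have := inv_diag_ge M hM k
    rw [hMkk k] at this
    rw [← one_div]
    exact this
  calc ∑ k, (x + (N k k).re)⁻¹ ≤ ∑ k, (M⁻¹ k k).re :=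
        Finset.sum_le_sum (fun k _ => h1 k)
    _ = ∑ i, (x + hN.1.eigenvalues i)⁻¹ := trace_inv_xN N hN x hx


lemma F_antitone :
    AntitoneOn (fun x : ℝ => (∑ k, Real.log (x + (N k k).re)) -
      ∑ i, Real.log (x + hN.1.eigenvalues i)) (Set.Ici (0:ℝ)) := by
  have hd : ∀ k, 0 < (N k k).re := diag_re_pos_of_pd N hN
  have hl : ∀ i, 0 < hN.1.eigenvalues i := hN.eigenvalues_pos
  have hderiv : ∀ x : ℝ, 0 ≤ x → HasDerivAt
      (fun x : ℝ => (∑ k, Real.log (x + (N k k).re)) -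
        ∑ i, Real.log (x + hN.1.eigenvalues i))
      ((∑ k, (x + (N k k).re)⁻¹) - ∑ i, (x + hN.1.eigenvalues i)⁻¹) x := by
    intro x hx
    have hterm : ∀ c : ℝ, 0 < c →
        HasDerivAt (fun y : ℝ => Real.log (y + c)) ((x + c)⁻¹) x := by
      intro c hc
      have h1 : HasDerivAt (fun y : ℝ => y + c) 1 x := (hasDerivAt_id x).add_const c
      have := h1.log (by positivity)
      simpa [one_div] using this
    have hsum1 : HasDerivAt (fun y : ℝ => ∑ k, Real.log (y + (N k k).re))
        (∑ k, (x + (N k k).re)⁻¹) x :=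
      HasDerivAt.fun_sum (fun k _ => hterm _ (hd k))
    have hsum2 : HasDerivAt (fun y : ℝ => ∑ i, Real.log (y + hN.1.eigenvalues i))
        (∑ i, (x + hN.1.eigenvalues i)⁻¹) x :=
      HasDerivAt.fun_sum (fun i _ => hterm _ (hl i))
    exact hsum1.sub hsum2
  apply antitoneOn_of_deriv_nonpos (convex_Ici 0)
  · apply ContinuousOn.sub
    · exact continuousOn_finset_sum _ (fun k _ =>
        ((continuous_id.add continuous_const).continuousOn).log
          (fun y hy => by have := hd k; have : (0:ℝ) ≤ y := hy; show y + (N k k).re ≠ 0; positivity))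
    · exact continuousOn_finset_sum _ (fun i _ =>
        ((continuous_id.add continuous_const).continuousOn).log
          (fun y hy => by have := hl i; have : (0:ℝ) ≤ y := hy; show y + hN.1.eigenvalues i ≠ 0; positivity))
  · intro x hx
    rw [interior_Ici] at hx
    exact (hderiv x (le_of_lt hx)).differentiableAt.differentiableWithinAt
  · intro x hx
    rw [interior_Ici] at hx
    rw [(hderiv x (le_of_lt hx)).deriv]
    exact sub_nonpos.mpr (key_ineq N hN x (le_of_lt hx))

lemma eq_on_Ici (x : ℝ) (hx : 0 ≤ x) :
    (Real.log (((x : ℂ) • (1 : Matrix (Fin K) (Fin K) ℂ) +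
          Matrix.diagonal (fun k => N k k)).det).re -
      Real.log (((x : ℂ) • (1 : Matrix (Fin K) (Fin K) ℂ) + N).det).re) =
    (∑ k, Real.log (x + (N k k).re)) - ∑ i, Real.log (x + hN.1.eigenvalues i) := by
  have hd : ∀ k, 0 < (N k k).re := diag_re_pos_of_pd N hN
  have hl : ∀ i, 0 < hN.1.eigenvalues i := hN.eigenvalues_pos
  have h1 : (((x : ℂ) • (1 : Matrix (Fin K) (Fin K) ℂ) +
      Matrix.diagonal (fun k => N k k)).det).re = ∏ k, (x + (N k k).re) := by
    have hdiag : (x : ℂ) • (1 : Matrix (Fin K) (Fin K) ℂ) +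
        Matrix.diagonal (fun k => N k k) =
        diagonal (fun k => ((x + (N k k).re : ℝ) : ℂ)) := by
      ext i j
      rcases eq_or_ne i j with rfl | h
      · simp only [Matrix.add_apply, Matrix.smul_apply, Matrix.one_apply_eq,
          Matrix.diagonal_apply_eq, smul_eq_mul, mul_one]
        conv_lhs => rw [diag_coe N hN.1 i]
        push_cast; ring
      · simp [Matrix.one_apply_ne h, Matrix.diagonal_apply_ne _ h]
    rw [hdiag, Matrix.det_diagonal]
    rw [show (∏ k, ((x + (N k k).re : ℝ) : ℂ)) = ((∏ k, (x + (N k k).re) : ℝ) : ℂ)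
      by push_cast; rfl]
    exact Complex.ofReal_re _
  have h2 : (((x : ℂ) • (1 : Matrix (Fin K) (Fin K) ℂ) + N).det).re
      = ∏ i, (x + hN.1.eigenvalues i) := by
    rw [det_xN N hN x]; exact Complex.ofReal_re _
  rw [h1, h2, Real.log_prod (fun k _ => by have := hd k; positivity),
    Real.log_prod (fun i _ => by have := hl i; positivity)]

end main


/-- The function `g₁(x) = log det(x I + N₁) − log det(x I + N)` is monotonically nonincreasing
in `x` for `x ≥ 0`, where `N` is a positive definite Hermitian complex matrix and `N₁` is its
diagonal part. -/
theorem g1_antitoneOn {K : ℕ} (N : Matrix (Fin K) (Fin K) ℂ) (hN : N.PosDef) :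
    AntitoneOn (fun x : ℝ =>
      Real.log (((x : ℂ) • (1 : Matrix (Fin K) (Fin K) ℂ) +
          Matrix.diagonal (fun k => N k k)).det).re -
      Real.log (((x : ℂ) • (1 : Matrix (Fin K) (Fin K) ℂ) + N).det).re)
      (Set.Ici (0 : ℝ)) := by
  intro a ha b hb hab
  have ha' : (0:ℝ) ≤ a := ha
  have hb' : (0:ℝ) ≤ b := hb
  simp only
  rw [eq_on_Ici N hN a ha', eq_on_Ici N hN b hb']
  exact F_antitone N hN ha hb hab
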